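/- Let N be a positive integer, p ∈ (0,1) with T = pN an integer, and let a₁, ..., a_N be i.i.d. random variables with values in [0,1]. Let m : [0,1] → [0,1] be measurable, M ∈ ℝ with P(m(a₁) ≥ M) = p, and let M̂ denote the T-th largest value among m(a₁), ..., m(a_N). Then for every t > 0, P(M̂ ≥ M + t) ≤ exp(-2N·P(m(a₁) ∈ [M, M+t))²). -/

import Mathlib

open MeasureTheory ProbabilityTheory

lemma bern_hoeffding {r : ℝ} (hr0 : 0 ≤ r) (hr1 : r ≤ 1) (s : ℝ) :
    1 - r + r * Real.exp s ≤ Real.exp (r * s + s ^ 2 / 8) := by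
  have hφ : ∀ x : ℝ, 0 < 1 - r + r * Real.exp x := by
    intro x
    rcases eq_or_lt_of_le hr0 with h | h
    · simp [← h]
    · linarith [mul_pos h (Real.exp_pos x), Real.exp_pos x]
  set g : ℝ → ℝ := fun x => r * x + x ^ 2 / 8 - Real.log (1 - r + r * Real.exp x) with hgdef
  set g' : ℝ → ℝ := fun x => r + x / 4 - r * Real.exp x / (1 - r + r * Real.exp x) with hg'def
  have hφd : ∀ x : ℝ, HasDerivAt (fun x => 1 - r + r * Real.exp x) (r * Real.exp x) x := by
    intro x
    simpa using ((Real.hasDerivAt_exp x).const_mul r).const_add (1 - r)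
  have hg : ∀ x, HasDerivAt g (g' x) x := by
    intro x
    have h2 := (hφd x).log (hφ x).ne'
    have h3 : HasDerivAt (fun x : ℝ => r * x + x ^ 2 / 8) (r + x / 4) x := by
      have := ((hasDerivAt_id x).const_mul r).add ((hasDerivAt_pow 2 x).div_const 8)
      exact this.congr_deriv (by push_cast; ring)
    exact h3.sub h2
  have hg' : ∀ x, HasDerivAt g'
      (1 / 4 - r * Real.exp x * (1 - r) / (1 - r + r * Real.exp x) ^ 2) x := by
    intro x
    have h2 : HasDerivAt (fun x => r * Real.exp x) (r * Real.exp x) x :=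
      (Real.hasDerivAt_exp x).const_mul r
    have h3 := h2.div (hφd x) (hφ x).ne'
    have h4 : HasDerivAt (fun x : ℝ => r + x / 4) (1 / 4) x := by
      simpa using ((hasDerivAt_id x).div_const 4).const_add r
    have h5 := h4.sub h3
    have hφx := (hφ x).ne'
    exact h5.congr_deriv (by field_simp; ring)
  have hg''nn : ∀ x : ℝ, 0 ≤ 1 / 4 - r * Real.exp x * (1 - r) / (1 - r + r * Real.exp x) ^ 2 := by
    intro x
    rw [sub_nonneg, div_le_iff₀ (pow_pos (hφ x) 2)]
    nlinarith [sq_nonneg (r * Real.exp x - (1 - r)), mul_nonneg hr0 (Real.exp_pos x).le]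
  have hg'mono : Monotone g' := by
    apply monotone_of_deriv_nonneg (fun x => (hg' x).differentiableAt)
    intro x
    rw [(hg' x).deriv]
    exact hg''nn x
  have hg'0 : g' 0 = 0 := by
    have h1 : (1:ℝ) - r + r * Real.exp 0 = 1 := by simp
    simp [hg'def, h1]
  have hg0 : g 0 = 0 := by
    have h1 : (1:ℝ) - r + r * Real.exp 0 = 1 := by simp
    simp [hgdef, h1]
  have hgc : Continuous g := by
    have : Differentiable ℝ g := fun x => (hg x).differentiableAt
    exact this.continuous
  have hgnn : ∀ x, 0 ≤ g x := by
    intro x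
    rcases le_total 0 x with hx | hx
    · have hm : MonotoneOn g (Set.Ici (0:ℝ)) := by
        apply monotoneOn_of_deriv_nonneg (convex_Ici 0) hgc.continuousOn
          (fun y _ => (hg y).differentiableAt.differentiableWithinAt)
        intro y hy
        rw [(hg y).deriv]
        have : (0:ℝ) ≤ y := by
          rw [interior_Ici] at hy; exact le_of_lt hy
        have := hg'mono this
        rw [hg'0] at this
        exact this
      have := hm (Set.mem_Ici.mpr le_rfl) (Set.mem_Ici.mpr hx) hx
      linarith [hg0 ▸ this]
    · have hm : AntitoneOn g (Set.Iic (0:ℝ)) := by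
        apply antitoneOn_of_deriv_nonpos (convex_Iic 0) hgc.continuousOn
          (fun y _ => (hg y).differentiableAt.differentiableWithinAt)
        intro y hy
        rw [(hg y).deriv]
        have : y ≤ (0:ℝ) := by
          rw [interior_Iic] at hy; exact le_of_lt hy
        have := hg'mono this
        rw [hg'0] at this
        exact this
      have := hm (Set.mem_Iic.mpr hx) (Set.mem_Iic.mpr le_rfl) hx
      linarith [hg0 ▸ this]
    
  have hlog : Real.log (1 - r + r * Real.exp s) ≤ r * s + s ^ 2 / 8 := by
    have := hgnn s
    simp only [hgdef] at this
    linarith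
  calc 1 - r + r * Real.exp s = Real.exp (Real.log (1 - r + r * Real.exp s)) :=
        (Real.exp_log (hφ s)).symm
    _ ≤ Real.exp (r * s + s ^ 2 / 8) := Real.exp_le_exp.mpr hlog

theorem stmt_13 (N T : ℕ) (hN : 0 < N) (p : ℝ) (hp : p ∈ Set.Ioo (0:ℝ) 1)
    (hT : (T : ℝ) = p * N) (hT1 : 1 ≤ T)
    {Ω : Type*} [MeasurableSpace Ω] (μ : Measure Ω) [IsProbabilityMeasure μ]
    (a : Fin N → Ω → ℝ) (ν : Measure ℝ)
    (hmeas : ∀ i, Measurable (a i))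
    (hindep : iIndepFun a μ)
    (hid : ∀ i, Measure.map (a i) μ = ν)
    (hrange : ∀ i ω, a i ω ∈ Set.Icc (0:ℝ) 1)
    (m : ℝ → ℝ) (hmmeas : Measurable m) (M : ℝ)
    (hmp : ∀ i, μ {ω | m (a i ω) ≥ M} = ENNReal.ofReal p)
    (Mhat : Ω → ℝ)
    (hMhat : ∀ ω, T ≤ (Finset.univ.filter (fun i => Mhat ω ≤ m (a i ω))).card ∧
      (Finset.univ.filter (fun i => Mhat ω < m (a i ω))).card < T ∧
      ∃ i, m (a i ω) = Mhat ω) :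
    ∀ t > (0:ℝ),
      μ {ω | Mhat ω ≥ M + t}
        ≤ ENNReal.ofReal (Real.exp
            (-2 * N * ((μ {ω | m (a ⟨0, hN⟩ ω) ∈ Set.Ico M (M + t)}).toReal) ^ 2)) := by
  intro t ht
  classical
  set B : Set ℝ := m ⁻¹' (Set.Ici (M + t)) with hBdef
  have hBmeas : MeasurableSet B := hmmeas measurableSet_Ici
  set C : Set ℝ := m ⁻¹' (Set.Ico M (M + t)) with hCdef
  have hCmeas : MeasurableSet C := hmmeas measurableSet_Ico
  have hν : IsProbabilityMeasure ν := by
    rw [← hid ⟨0, hN⟩]; exact Measure.isProbabilityMeasure_map (hmeas _).aemeasurable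
  have hpreB : ∀ i, μ (a i ⁻¹' B) = ν B := by
    intro i; rw [← hid i, Measure.map_apply (hmeas i) hBmeas]
  have hpreC : ∀ i, μ (a i ⁻¹' C) = ν C := by
    intro i; rw [← hid i, Measure.map_apply (hmeas i) hCmeas]
  -- split {m ≥ M}
  have hsplit : ν B + ν C = ENNReal.ofReal p := by
    have hset : (m ⁻¹' (Set.Ici M)) = B ∪ C := by
      ext x
      simp only [Set.mem_preimage, Set.mem_Ici, Set.mem_union, Set.mem_Ico, hBdef, hCdef]
      constructor
      · intro h
        rcases le_or_gt (M + t) (m x) with h' | h'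
        · exact Or.inl h'
        · exact Or.inr ⟨h, h'⟩
      · rintro (h | ⟨h, _⟩)
        · linarith
        · exact h
    have hdisj : Disjoint B C := by
      rw [Set.disjoint_left]
      intro x hx hx'
      simp only [Set.mem_preimage, Set.mem_Ici, Set.mem_Ico, hBdef, hCdef] at hx hx'
      linarith [hx'.2]
    have hνIci : ν (m ⁻¹' (Set.Ici M)) = ENNReal.ofReal p := by
      rw [← hid ⟨0, hN⟩, Measure.map_apply (hmeas _) (hmmeas measurableSet_Ici)]
      exact hmp ⟨0, hN⟩
    rw [hset, measure_union hdisj hCmeas] at hνIci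
    exact hνIci
  set q : ℝ := (ν C).toReal with hqdef
  set ρ : ℝ := (ν B).toReal with hρdef
  have hsum : ρ + q = p := by
    have := congrArg ENNReal.toReal hsplit
    rwa [ENNReal.toReal_add (measure_ne_top _ _) (measure_ne_top _ _),
      ENNReal.toReal_ofReal hp.1.le] at this
  have hq0 : 0 ≤ q := ENNReal.toReal_nonneg
  have hρ0 : 0 ≤ ρ := ENNReal.toReal_nonneg
  have hρ1 : ρ ≤ 1 := by linarith [hp.2]
  -- the goal's measure equals q
  have hgoalq : (μ {ω | m (a ⟨0, hN⟩ ω) ∈ Set.Ico M (M + t)}).toReal = q := by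
    have : {ω | m (a ⟨0, hN⟩ ω) ∈ Set.Ico M (M + t)} = a ⟨0, hN⟩ ⁻¹' C := rfl
    rw [this, hpreC]
  -- indicator random variables
  set X : Fin N → Ω → ℝ := fun i => (B.indicator (fun _ => (1:ℝ))) ∘ (a i) with hXdef
  have hX01 : ∀ i ω, X i ω = if a i ω ∈ B then 1 else 0 := by
    intro i ω; simp [hXdef, Set.indicator_apply]
  have hXind : ∀ i, X i = (a i ⁻¹' B).indicator (fun _ => (1:ℝ)) := by
    intro i; funext ω
    rw [hX01]
    simp [Set.indicator_apply, Set.mem_preimage]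
  have hXmeas : ∀ i, Measurable (X i) :=
    fun i => (measurable_const.indicator hBmeas).comp (hmeas i)
  have hXindep : iIndepFun X μ :=
    hindep.comp _ (fun _ => measurable_const.indicator hBmeas)
  have hXint : ∀ i, Integrable (X i) μ := by
    intro i
    rw [hXind]
    exact (integrable_const (1:ℝ)).indicator (hmeas i hBmeas)
  have hXexp : ∀ (s : ℝ) i, (fun ω => Real.exp (s * X i ω))
      = fun ω => 1 + (Real.exp s - 1) * X i ω := by
    intro s i; funext ω
    by_cases h : a i ω ∈ B
    · rw [hX01]; simp [h]
    · rw [hX01]; simp [h]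
  have hint : ∀ (s : ℝ) i, Integrable (fun ω => Real.exp (s * X i ω)) μ := by
    intro s i
    rw [hXexp]
    exact (integrable_const 1).add ((hXint i).const_mul _)
  have hXintegral : ∀ i, ∫ ω, X i ω ∂μ = ρ := by
    intro i
    rw [hXind]
    rw [integral_indicator_const (1:ℝ) (hmeas i hBmeas)]
    rw [measureReal_def, hpreB i]
    simp [hρdef]
  have hmgf : ∀ (s : ℝ) i, mgf (X i) μ s = 1 - ρ + ρ * Real.exp s := by
    intro s i
    rw [mgf, hXexp]
    rw [integral_add (integrable_const 1) ((hXint i).const_mul _),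
      integral_const, integral_const_mul, hXintegral i]
    simp only [measure_univ, probReal_univ, ENNReal.toReal_one, smul_eq_mul, one_mul]
    ring
  -- inclusion of events
  have hincl : {ω | Mhat ω ≥ M + t} ⊆ {ω | (T:ℝ) ≤ (∑ i, X i) ω} := by
    intro ω hω
    simp only [Set.mem_setOf_eq] at hω ⊢
    set F := Finset.univ.filter (fun i => Mhat ω ≤ m (a i ω)) with hFdef
    have hcard : T ≤ F.card := (hMhat ω).1
    have hF1 : ∀ i ∈ F, X i ω = 1 := by
      intro i hi
      rw [hX01]
      have hMle : Mhat ω ≤ m (a i ω) := by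
        simp only [hFdef, Finset.mem_filter] at hi; exact hi.2
      have : a i ω ∈ B := by
        simp only [hBdef, Set.mem_preimage, Set.mem_Ici]
        linarith
      simp [this]
    have hsum1 : (F.card : ℝ) = ∑ i ∈ F, X i ω := by
      rw [Finset.sum_congr rfl hF1]
      simp
    have hle : ∑ i ∈ F, X i ω ≤ ∑ i, X i ω := by
      apply Finset.sum_le_sum_of_subset_of_nonneg (Finset.subset_univ F)
      intro i _ _
      rw [hX01]
      split <;> norm_num
    have : (∑ i, X i) ω = ∑ i, X i ω := by simp
    rw [this]
    calc (T:ℝ) ≤ (F.card : ℝ) := by exact_mod_cast hcard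
      _ = ∑ i ∈ F, X i ω := hsum1
      _ ≤ ∑ i, X i ω := hle
  -- Chernoff bound
  set s : ℝ := 4 * q with hsdef
  have hs0 : 0 ≤ s := by positivity
  have hchern := measure_ge_le_exp_mul_mgf (μ := μ) (X := ∑ i, X i) (T : ℝ) hs0
    (hXindep.integrable_exp_mul_sum hXmeas (fun i _ => hint s i))
  have hmgfsum : mgf (∑ i, X i) μ s = (1 - ρ + ρ * Real.exp s) ^ N := by
    rw [hXindep.mgf_sum hXmeas]
    simp [hmgf s]
  have hbase0 : 0 ≤ 1 - ρ + ρ * Real.exp s := by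
    nlinarith [Real.exp_pos s, mul_nonneg hρ0 (Real.exp_pos s).le]
  have hpow : (1 - ρ + ρ * Real.exp s) ^ N ≤ Real.exp ((N:ℝ) * (ρ * s + s ^ 2 / 8)) := by
    rw [Real.exp_nat_mul]
    exact pow_le_pow_left₀ hbase0 (bern_hoeffding hρ0 hρ1 s) N
  have key : (μ {ω | (T:ℝ) ≤ (∑ i, X i) ω}).toReal ≤ Real.exp (-2 * N * q ^ 2) := by
    refine hchern.trans ?_
    rw [hmgfsum]
    calc Real.exp (-s * T) * (1 - ρ + ρ * Real.exp s) ^ N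
        ≤ Real.exp (-s * T) * Real.exp ((N:ℝ) * (ρ * s + s ^ 2 / 8)) := by
          exact mul_le_mul_of_nonneg_left hpow (Real.exp_pos _).le
      _ = Real.exp (-s * T + (N:ℝ) * (ρ * s + s ^ 2 / 8)) := (Real.exp_add _ _).symm
      _ = Real.exp (-2 * N * q ^ 2) := by
          congr 1
          have hρeq : ρ = p - q := by linarith
          rw [hT, hρeq, hsdef]
          ring
  calc μ {ω | Mhat ω ≥ M + t} ≤ μ {ω | (T:ℝ) ≤ (∑ i, X i) ω} := measure_mono hincl
    _ = ENNReal.ofReal ((μ {ω | (T:ℝ) ≤ (∑ i, X i) ω}).toReal) :=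
        (ENNReal.ofReal_toReal (measure_ne_top _ _)).symm
    _ ≤ ENNReal.ofReal (Real.exp
        (-2 * N * ((μ {ω | m (a ⟨0, hN⟩ ω) ∈ Set.Ico M (M + t)}).toReal) ^ 2)) := by
        rw [hgoalq]
        exact ENNReal.ofReal_le_ofReal key
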